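/- arXiv:1309.1272 — 4 statements merged into one kernel-verified Lean document; each statement's English description precedes it below -/
import Mathlib

section
/- The space of labeled generalized Cayley graphs X_{π,Σ} over a finite port set π and finite label set Σ, equipped with the Gromov–Hausdorff–Cantor metric d, is a compact metric space: every sequence of generalized Cayley graphs admits a converging subsequence. -/
/-!  Generalized Cayley graphs (Arrighi–Martiel–Nesme, "Intrinsic universality of
causal graph dynamics").

A word over the alphabet `Π = π × π` describes a path in a port graph: the letter
`(a, b)` means "leave the current vertex through port `a` and enter the next vertex
through port `b`".  -/

/-- A word (path description) over the alphabet `π × π`. -/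
abbrev Word (π : Type) := List (π × π)

/-- A labeled generalized Cayley graph over the port set `π` with vertex labels in `Λ`:
a language `L ⊆ (π × π)*` together with an equivalence relation `rel` on `L`
satisfying prefix-closure, `rel`-congruence, invertibility of edges and port
determinism, and a labeling of the `rel`-classes (encoded as a partial function
`label` on words, defined exactly on `L` and constant on `rel`-classes).
The pointed vertex is the class of the empty word `[]`. -/
structure GCGraph (π : Type) (Λ : Type) where
  /-- the language of paths -/
  L : Set (Word π)
  /-- the equivalence relation `≡_L` (two paths are related iff they lead to the
  same vertex); it only relates members of `L`. -/
  rel : Word π → Word π → Prop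
  /-- the labeling: `label u` is the label of the vertex reached by `u` (it is
  `some _` exactly on `L`). -/
  label : Word π → Option Λ
  eps_mem : ([] : Word π) ∈ L
  rel_refl : ∀ u ∈ L, rel u u
  rel_symm : ∀ {u v}, rel u v → rel v u
  rel_trans : ∀ {u v w}, rel u v → rel v w → rel u w
  rel_mem : ∀ {u v}, rel u v → u ∈ L
  /-- axiom (1): prefix closure. -/
  prefix_closed : ∀ u v : Word π, u ++ v ∈ L → u ∈ L
  /-- axiom (2): congruence of the equivalence relation. -/
  rel_congr : ∀ u u' v : Word π, rel u u' → u ++ v ∈ L →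
      u' ++ v ∈ L ∧ rel (u' ++ v) (u ++ v)
  /-- axiom (3): every edge can be traversed backwards. -/
  edge_inv : ∀ (u : Word π) (a b : π), u ++ [(a, b)] ∈ L →
      u ++ [(a, b), (b, a)] ∈ L ∧ rel (u ++ [(a, b), (b, a)]) u
  /-- axiom (4): port determinism — a vertex cannot be connected to two different
  vertices using the same port. -/
  port_det : ∀ (u u' : Word π) (a b c : π), rel u u' →
      u ++ [(a, b)] ∈ L → u' ++ [(a, c)] ∈ L → b = c
  label_isSome : ∀ u, (label u).isSome ↔ u ∈ L
  label_congr : ∀ {u v}, rel u v → label u = label v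

/-- The raw data of a disk: a language, a relation and a labeling
(the restriction of a generalized Cayley graph to words of bounded length). -/
structure DiskData (π Λ : Type) where
  L : Set (Word π)
  rel : Word π → Word π → Prop
  label : Word π → Option Λ

/-- The disk `X^r` of radius `r` of a generalized Cayley graph: the restriction of
`X` to the words of `L` of length at most `r` (keeping labels). -/
def GCGraph.disk {π Λ : Type} (X : GCGraph π Λ) (r : ℕ) : DiskData π Λ where
  L := {u | u ∈ X.L ∧ u.length ≤ r}
  rel := fun u v => X.rel u v ∧ u.length ≤ r ∧ v.length ≤ r
  label := fun u => if u.length ≤ r then X.label u else none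

/-- The Gromov–Hausdorff–Cantor metric on generalized Cayley graphs:
`d(X, Y) = 0` if `X = Y`, and `d(X, Y) = (1/2)^r` otherwise, where `r` is the
minimal radius such that `X^r ≠ Y^r`. -/
noncomputable def GHCdist {π Λ : Type} (X Y : GCGraph π Λ) : ℝ :=
  letI := Classical.propDecidable (X = Y)
  if X = Y then 0 else (1 / 2 : ℝ) ^ sInf {r : ℕ | X.disk r ≠ Y.disk r}

/-! ### Auxiliary material for the proof -/

/-- Index type for encoding a generalized Cayley graph as a family of booleans. -/
abbrev GCIdx (d : ℕ) (Λ : Type) :=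
  Word (Fin d) ⊕ (Word (Fin d) × Word (Fin d)) ⊕ (Word (Fin d) × Option Λ)

open Classical in
/-- Boolean encoding of a generalized Cayley graph. -/
noncomputable def GCGraph.enc {d : ℕ} {Λ : Type} (X : GCGraph (Fin d) Λ) :
    GCIdx d Λ → Bool := fun i =>
  match i with
  | .inl w => decide (w ∈ X.L)
  | .inr (.inl (v, w)) => decide (X.rel v w)
  | .inr (.inr (w, o)) => decide (X.label w = o)

/-- Two generalized Cayley graphs with the same data are equal. -/
theorem GCGraph.ext_aux {π Λ : Type} {A B : GCGraph π Λ} (h1 : A.L = B.L)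
    (h2 : A.rel = B.rel) (h3 : A.label = B.label) : A = B := by
  cases A; cases B
  simp only at h1 h2 h3
  subst h1; subst h2; subst h3
  rfl

/-- If all disks agree, the graphs are equal. -/
theorem GCGraph.eq_of_disks {π Λ : Type} {A B : GCGraph π Λ}
    (h : ∀ r, A.disk r = B.disk r) : A = B := by
  refine GCGraph.ext_aux ?_ ?_ ?_
  · ext w
    have hL := congrArg DiskData.L (h w.length)
    have : ∀ C : GCGraph π Λ, w ∈ C.L ↔ w ∈ (C.disk w.length).L := by
      intro C; simp [GCGraph.disk]
    rw [this A, this B, hL]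
  · funext v w
    have hR := congrArg DiskData.rel (h (max v.length w.length))
    have : ∀ C : GCGraph π Λ, C.rel v w ↔
        (C.disk (max v.length w.length)).rel v w := by
      intro C
      simp [GCGraph.disk, le_max_left, le_max_right]
    apply propext
    rw [this A, this B, hR]
  · funext w
    have hl := congrArg DiskData.label (h w.length)
    have : ∀ C : GCGraph π Λ, C.label w = (C.disk w.length).label w := by
      intro C; simp [GCGraph.disk]
    rw [this A, this B, hl]

/-- **Compactness** (Lemma 1).  The space `X_{π,Σ}` of labeled generalized Cayley
graphs over the finite port set `π = {1, …, d}` and a finite label set `Σ`,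
equipped with the Gromov–Hausdorff–Cantor metric, is a compact metric space:
every sequence of generalized Cayley graphs admits a converging subsequence. -/
theorem GCGraph.sequentially_compact {d : ℕ} {Λ : Type} [Fintype Λ]
    (u : ℕ → GCGraph (Fin d) Λ) :
    ∃ (X : GCGraph (Fin d) Λ) (φ : ℕ → ℕ), StrictMono φ ∧
      Filter.Tendsto (fun n => GHCdist (u (φ n)) X) Filter.atTop (nhds (0 : ℝ)) := by
  classical
  -- extract a subsequence along which the boolean encodings converge
  obtain ⟨f, φ, hφ, hconv⟩ := CompactSpace.tendsto_subseq (fun n => (u n).enc)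
  -- pointwise eventual equality of the encodings with the limit `f`
  have hpt : ∀ i : GCIdx d Λ, ∀ᶠ n in Filter.atTop, (u (φ n)).enc i = f i := by
    intro i
    have h1 : Filter.Tendsto (fun n => (u (φ n)).enc i) Filter.atTop (nhds (f i)) :=
      (tendsto_pi_nhds.mp hconv) i
    have h2 : {f i} ∈ nhds (f i) := (isOpen_discrete {f i}).mem_nhds rfl
    filter_upwards [h1 h2] with n hn using hn
  -- eventual descriptions of membership, relation, labels
  have hm : ∀ w : Word (Fin d),
      ∀ᶠ n in Filter.atTop, (w ∈ (u (φ n)).L ↔ f (.inl w) = true) := by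
    intro w
    filter_upwards [hpt (.inl w)] with n hn
    rw [← hn]; simp [GCGraph.enc]
  have hr : ∀ v w : Word (Fin d),
      ∀ᶠ n in Filter.atTop, ((u (φ n)).rel v w ↔ f (.inr (.inl (v, w))) = true) := by
    intro v w
    filter_upwards [hpt (.inr (.inl (v, w)))] with n hn
    rw [← hn]; simp [GCGraph.enc]
  have hlabex : ∀ w : Word (Fin d), ∃ o : Option Λ,
      ∀ᶠ n in Filter.atTop, (u (φ n)).label w = o := by
    intro w
    have h1 : ∀ᶠ n in Filter.atTop, ∀ o : Option Λ,
        ((u (φ n)).label w = o ↔ f (.inr (.inr (w, o))) = true) := by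
      rw [Filter.eventually_all]
      intro o
      filter_upwards [hpt (.inr (.inr (w, o)))] with n hn
      rw [← hn]; simp [GCGraph.enc]
    obtain ⟨n0, hn0⟩ := h1.exists
    refine ⟨(u (φ n0)).label w, ?_⟩
    have hf : f (.inr (.inr (w, (u (φ n0)).label w))) = true := (hn0 _).mp rfl
    filter_upwards [h1] with n hn
    exact (hn _).mpr hf
  choose lab hlab using hlabex
  -- build the limit graph
  set XL : Set (Word (Fin d)) := {w | f (.inl w) = true} with hXL
  set Xrel : Word (Fin d) → Word (Fin d) → Prop :=
    fun v w => f (.inr (.inl (v, w))) = true with hXrel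
  have ax1 : ([] : Word (Fin d)) ∈ XL := by
    obtain ⟨n, h1⟩ := (hm []).exists
    exact h1.mp (u (φ n)).eps_mem
  have ax2 : ∀ w ∈ XL, Xrel w w := by
    intro w hw
    obtain ⟨n, h1, h2⟩ := ((hm w).and (hr w w)).exists
    exact h2.mp ((u (φ n)).rel_refl w (h1.mpr hw))
  have ax3 : ∀ v w : Word (Fin d), Xrel v w → Xrel w v := by
    intro v w hvw
    obtain ⟨n, h1, h2⟩ := ((hr v w).and (hr w v)).exists
    exact h2.mp ((u (φ n)).rel_symm (h1.mpr hvw))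
  have ax4 : ∀ v w x : Word (Fin d), Xrel v w → Xrel w x → Xrel v x := by
    intro v w x hvw hwx
    obtain ⟨n, h1, h2, h3⟩ := ((hr v w).and ((hr w x).and (hr v x))).exists
    exact h3.mp ((u (φ n)).rel_trans (h1.mpr hvw) (h2.mpr hwx))
  have ax5 : ∀ v w : Word (Fin d), Xrel v w → v ∈ XL := by
    intro v w hvw
    obtain ⟨n, h1, h2⟩ := ((hr v w).and (hm v)).exists
    exact h2.mp ((u (φ n)).rel_mem (h1.mpr hvw))
  have ax6 : ∀ v w : Word (Fin d), v ++ w ∈ XL → v ∈ XL := by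
    intro v w hvw
    obtain ⟨n, h1, h2⟩ := ((hm (v ++ w)).and (hm v)).exists
    exact h2.mp ((u (φ n)).prefix_closed v w (h1.mpr hvw))
  have ax7 : ∀ a a' v : Word (Fin d), Xrel a a' → a ++ v ∈ XL →
      a' ++ v ∈ XL ∧ Xrel (a' ++ v) (a ++ v) := by
    intro a a' v h1 h2
    obtain ⟨n, g1, g2, g3, g4⟩ := ((hr a a').and ((hm (a ++ v)).and
      ((hm (a' ++ v)).and (hr (a' ++ v) (a ++ v))))).exists
    have := (u (φ n)).rel_congr a a' v (g1.mpr h1) (g2.mpr h2)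
    exact ⟨g3.mp this.1, g4.mp this.2⟩
  have ax8 : ∀ (w : Word (Fin d)) (a b : Fin d), w ++ [(a, b)] ∈ XL →
      w ++ [(a, b), (b, a)] ∈ XL ∧ Xrel (w ++ [(a, b), (b, a)]) w := by
    intro w a b h1
    obtain ⟨n, g1, g2, g3⟩ := ((hm (w ++ [(a, b)])).and
      ((hm (w ++ [(a, b), (b, a)])).and (hr (w ++ [(a, b), (b, a)]) w))).exists
    have := (u (φ n)).edge_inv w a b (g1.mpr h1)
    exact ⟨g2.mp this.1, g3.mp this.2⟩
  have ax9 : ∀ (v v' : Word (Fin d)) (a b c : Fin d), Xrel v v' →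
      v ++ [(a, b)] ∈ XL → v' ++ [(a, c)] ∈ XL → b = c := by
    intro v v' a b c h1 h2 h3
    obtain ⟨n, g1, g2, g3⟩ := ((hr v v').and ((hm (v ++ [(a, b)])).and
      (hm (v' ++ [(a, c)])))).exists
    exact (u (φ n)).port_det v v' a b c (g1.mpr h1) (g2.mpr h2) (g3.mpr h3)
  have ax10 : ∀ w : Word (Fin d), (lab w).isSome ↔ w ∈ XL := by
    intro w
    obtain ⟨n, g1, g2⟩ := ((hlab w).and (hm w)).exists
    rw [← g1, (u (φ n)).label_isSome w]
    exact g2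
  have ax11 : ∀ v w : Word (Fin d), Xrel v w → lab v = lab w := by
    intro v w hvw
    obtain ⟨n, g1, g2, g3⟩ := ((hr v w).and ((hlab v).and (hlab w))).exists
    rw [← g2, ← g3]
    exact (u (φ n)).label_congr (g1.mpr hvw)
  set X : GCGraph (Fin d) Λ :=
    { L := XL, rel := Xrel, label := lab
      eps_mem := ax1, rel_refl := ax2
      rel_symm := fun {v w} h => ax3 v w h
      rel_trans := fun {v w x} h h' => ax4 v w x h h'
      rel_mem := fun {v w} h => ax5 v w h
      prefix_closed := ax6, rel_congr := ax7
      edge_inv := ax8, port_det := ax9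
      label_isSome := ax10
      label_congr := fun {v w} h => ax11 v w h } with hX
  refine ⟨X, φ, hφ, ?_⟩
  · -- disks eventually agree
    have hSfin : ∀ r : ℕ, {w : Word (Fin d) | w.length ≤ r}.Finite := fun r =>
      List.finite_length_le _ r
    have hdisk : ∀ r : ℕ, ∀ᶠ n in Filter.atTop, (u (φ n)).disk r = X.disk r := by
      intro r
      have h1 : ∀ᶠ n in Filter.atTop, ∀ w ∈ {w : Word (Fin d) | w.length ≤ r},
          (w ∈ (u (φ n)).L ↔ w ∈ X.L) := by
        rw [Filter.eventually_all_finite (hSfin r)]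
        exact fun w _ => hm w
      have h2 : ∀ᶠ n in Filter.atTop, ∀ p ∈ ({w : Word (Fin d) | w.length ≤ r} ×ˢ
          {w : Word (Fin d) | w.length ≤ r}),
          ((u (φ n)).rel p.1 p.2 ↔ X.rel p.1 p.2) := by
        rw [Filter.eventually_all_finite ((hSfin r).prod (hSfin r))]
        exact fun p _ => hr p.1 p.2
      have h3 : ∀ᶠ n in Filter.atTop, ∀ w ∈ {w : Word (Fin d) | w.length ≤ r},
          (u (φ n)).label w = X.label w := by
        rw [Filter.eventually_all_finite (hSfin r)]
        exact fun w _ => hlab w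
      filter_upwards [h1, h2, h3] with n g1 g2 g3
      simp only [GCGraph.disk, DiskData.mk.injEq]
      refine ⟨?_, ?_, ?_⟩
      · ext w
        simp only [Set.mem_setOf_eq]
        constructor
        · rintro ⟨ha, hb⟩; exact ⟨(g1 w hb).mp ha, hb⟩
        · rintro ⟨ha, hb⟩; exact ⟨(g1 w hb).mpr ha, hb⟩
      · funext v w
        apply propext
        constructor
        · rintro ⟨ha, hb, hc⟩; exact ⟨(g2 (v, w) ⟨hb, hc⟩).mp ha, hb, hc⟩
        · rintro ⟨ha, hb, hc⟩; exact ⟨(g2 (v, w) ⟨hb, hc⟩).mpr ha, hb, hc⟩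
      · funext w
        by_cases hw : w.length ≤ r
        · simp [hw, g3 w hw]
        · simp [hw]
    -- conclude
    rw [Metric.tendsto_atTop]
    intro ε hε
    obtain ⟨r, hrε⟩ : ∃ r : ℕ, ((1 : ℝ) / 2) ^ r < ε :=
      exists_pow_lt_of_lt_one hε (by norm_num)
    have hall : ∀ᶠ n in Filter.atTop, ∀ s ∈ Set.Iic r, (u (φ n)).disk s = X.disk s := by
      rw [Filter.eventually_all_finite (Set.finite_Iic r)]
      exact fun s _ => hdisk s
    obtain ⟨N, hN⟩ := Filter.eventually_atTop.mp hall
    refine ⟨N, fun n hn => ?_⟩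
    rw [Real.dist_eq, sub_zero]
    by_cases hXeq : u (φ n) = X
    · rw [GHCdist]; simp [hXeq, hε]
    · rw [GHCdist]
      simp only [hXeq, if_false]
      rw [abs_of_nonneg (by positivity)]
      set S := {s : ℕ | (u (φ n)).disk s ≠ X.disk s} with hS
      have hSne : S.Nonempty := by
        by_contra hc
        rw [Set.not_nonempty_iff_eq_empty] at hc
        refine hXeq (GCGraph.eq_of_disks fun s => ?_)
        by_contra hs
        exact absurd (hc ▸ hs : s ∈ (∅ : Set ℕ)) (Set.notMem_empty s)
      have hmem : sInf S ∈ S := Nat.sInf_mem hSne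
      have hrlt : r < sInf S := by
        by_contra hc
        push_neg at hc
        exact hmem (hN n hn (sInf S) hc)
      calc ((1 : ℝ) / 2) ^ sInf S ≤ ((1 : ℝ) / 2) ^ r :=
            pow_le_pow_of_le_one (by norm_num) (by norm_num) hrlt.le
        _ < ε := hrε
end

section
/- Fix parameters π, Σ, r, b. Define the partial function f_univ on disks of radius r of graphs labeled over Σ × Γ_{π,Σ,r,b} by f_univ(X[⟨f⟩]_u^r) = f(X_u^r)[⟨f⟩] for every X ∈ X_{π,Σ}, every f ∈ F_{π,Σ,r,b}, and every vertex u of X, where X[⟨f⟩] denotes X with the description ⟨f⟩ adjoined to every vertex label. Then f_univ is a local rule (it satisfies the naming, boundedness, and both consistency conditions defining local rules). -/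
/-! Labeled graphs `G_{π,Σ}` with ports, consistency, and local rules. -/

/-- The raw data of a labeled port graph in `G_{π,Σ}`: a set of vertices (with
names in `VN`), a set of edges — unordered pairs of vertex-port pairs — and a
labeling of the vertices, encoded as the set of pairs `(vertex, label)`. -/
structure PreGraph (VN π Λ : Type) where
  V : Set VN
  E : Set (Sym2 (VN × π))
  lab : Set (VN × Λ)

/-- `G` is a well-formed labeled graph of `G_{π,Σ}`: edges are two-element subsets
of `V(G) : π`, every vertex-port pair `u : i` appears in at most one edge, and
every vertex carries exactly one label. -/
def IsGraph {VN π Λ : Type} (G : PreGraph VN π Λ) : Prop :=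
  (∀ e ∈ G.E, ¬ e.IsDiag) ∧
  (∀ e ∈ G.E, ∀ x ∈ e, (x : VN × π).1 ∈ G.V) ∧
  (∀ x : VN × π, ∀ e₁ ∈ G.E, ∀ e₂ ∈ G.E, x ∈ e₁ → x ∈ e₂ → e₁ = e₂) ∧
  (∀ v ∈ G.V, ∃! a : Λ, (v, a) ∈ G.lab) ∧
  (∀ p ∈ G.lab, (p : VN × Λ).1 ∈ G.V)

/-- Two labeled graphs are consistent iff they agree on their intersection: they
agree on the edges attached to shared vertex-port pairs, and on the labels of
shared vertices. -/
def Consistent {VN π Λ : Type} (G H : PreGraph VN π Λ) : Prop :=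
  (∀ (u v w : VN) (k l p : π),
      s((u, k), (v, l)) ∈ G.E → s((u, k), (w, p)) ∈ H.E → v = w ∧ l = p) ∧
  (∀ (v : VN) (a b : Λ), (v, a) ∈ G.lab → (v, b) ∈ H.lab → a = b)

/-- Non-trivial consistency: consistency together with a non-empty intersection of
the vertex sets. -/
def NonTrivConsistent {VN π Λ : Type} (G H : PreGraph VN π Λ) : Prop :=
  Consistent G H ∧ (G.V ∩ H.V).Nonempty

/-- The union of two labeled graphs: union of the vertex sets, of the edge sets and
of the labelings. -/
def PreGraph.union {VN π Λ : Type} (G H : PreGraph VN π Λ) : PreGraph VN π Λ where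
  V := G.V ∪ H.V
  E := G.E ∪ H.E
  lab := G.lab ∪ H.lab

/-- `Y` is the shift of the generalized Cayley graph `X` along the path `u`
(the pointer of `X` is moved along `u`): its language is
`{v | u.v ∈ L}`, two paths are related iff their `u`-prefixed versions are, and
labels are inherited. -/
def IsShift {π Λ : Type} (X : GCGraph π Λ) (u : Word π) (Y : GCGraph π Λ) : Prop :=
  Y.L = {v : Word π | u ++ v ∈ X.L} ∧
  (∀ v v' : Word π, Y.rel v v' ↔ X.rel (u ++ v) (u ++ v')) ∧
  (∀ v : Word π, Y.label v = X.label (u ++ v))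

/-! Local rules.  The images of a local rule are graphs whose vertex names are
(disjoint) subsets of `V(X).S`: sets of pairs (path of `X`, suffix in
`S = {ε, 1, …, s}`), the suffix `ε` being represented by `0 : Fin (s+1)`. -/

/-- Vertex names used by local rules: subsets of `V(X).S`, i.e. sets of
(path, suffix) pairs. -/
abbrev VName (π : Type) (s : ℕ) := Set (Word π × Fin (s + 1))

/-- Prefixing a vertex name by a word `u`: every path occurring in the name is
prefixed by `u`. -/
def prefixName {π : Type} {s : ℕ} (u : Word π) (N : VName π s) : VName π s :=
  (fun p => (u ++ p.1, p.2)) '' N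

/-- `u.G`: the graph `G` with all vertex names prefixed by the word `u`. -/
def PreGraph.prefixG {π Λ : Type} {s : ℕ} (u : Word π)
    (G : PreGraph (VName π s) π Λ) : PreGraph (VName π s) π Λ where
  V := prefixName u '' G.V
  E := Sym2.map (fun x => (prefixName u x.1, x.2)) '' G.E
  lab := (fun q => (prefixName u q.1, q.2)) '' G.lab

/-- `f` is a (possibly partial, with domain `D`) local rule of parameters
`(|π|, Σ, r, b)` from disks of radius `r` to `G_{π,Σ}`:

* it only depends on the disk of radius `r` of its argument (it is a function of
  the disk `X^r`);
* its images are well-formed graphs;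
* the vertices of `f(X)` are pairwise disjoint subsets of `V(X^r).S`
  (sets of (path, suffix) pairs, closed under the vertex-equivalence of the disk)
  and the vertex named `ε` belongs to `f(X)`;
* images have at most `b` vertices;
* for a vertex `u ∈ X^0`, `f(X)` and `u.f(X_u)` are non-trivially consistent;
* for a vertex `u ∈ X^{2r+1}`, `f(X)` and `u.f(X_u)` are consistent. -/
structure IsLocalRule {π Λ : Type} {s : ℕ} (D : Set (GCGraph π Λ)) (r b : ℕ)
    (f : GCGraph π Λ → PreGraph (VName π s) π Λ) : Prop where
  localr : ∀ X ∈ D, ∀ Y ∈ D, X.disk r = Y.disk r → f X = f Y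
  graph : ∀ X ∈ D, IsGraph (f X)
  names_sub : ∀ X ∈ D, ∀ N ∈ (f X).V, ∀ p ∈ N,
      (p : Word π × Fin (s + 1)).1 ∈ X.L ∧ p.1.length ≤ r
  names_closed : ∀ X ∈ D, ∀ N ∈ (f X).V, ∀ p ∈ N, ∀ q : Word π,
      X.rel (p : Word π × Fin (s + 1)).1 q → q.length ≤ r → (q, p.2) ∈ N
  names_disj : ∀ X ∈ D, ∀ N ∈ (f X).V, ∀ M ∈ (f X).V, N ≠ M → N ∩ M = ∅
  eps_vertex : ∀ X ∈ D, ∃ N ∈ (f X).V, (([] : Word π), (0 : Fin (s + 1))) ∈ N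
  bounded : ∀ X ∈ D, (f X).V.Finite ∧ (f X).V.ncard ≤ b
  consist_near : ∀ X ∈ D, ∀ u ∈ X.L, u.length ≤ 0 → ∀ Y, IsShift X u Y → Y ∈ D →
      NonTrivConsistent (f X) ((f Y).prefixG u)
  consist_far : ∀ X ∈ D, ∀ u ∈ X.L, u.length ≤ 2 * r + 1 → ∀ Y, IsShift X u Y → Y ∈ D →
      Consistent (f X) ((f Y).prefixG u)

/-- Adjoining a description `γ` to every vertex label of a labeled graph. -/
def adjoinPre {VN π Λ Γ : Type} (γ : Γ) (G : PreGraph VN π Λ) :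
    PreGraph VN π (Λ × Γ) where
  V := G.V
  E := G.E
  lab := (fun q => (q.1, (q.2, γ))) '' G.lab

/-- `Y = X[γ]`: the generalized Cayley graph `X` with the description `γ`
adjoined to every vertex label. -/
def IsAdjoin {π Λ Γ : Type} (X : GCGraph π Λ) (γ : Γ) (Y : GCGraph π (Λ × Γ)) :
    Prop :=
  Y.L = X.L ∧ (∀ u v : Word π, Y.rel u v ↔ X.rel u v) ∧
  (∀ u : Word π, Y.label u = (X.label u).map (fun a => (a, γ)))

/-! ### Auxiliary lemmas for `funiv_isLocalRule` -/

section FunivAux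

variable {π Λ Γ : Type}

lemma gcg_eq {X X' : GCGraph π Λ} (hL : X.L = X'.L)
    (hrel : X.rel = X'.rel) (hlab : X.label = X'.label) : X = X' := by
  cases X; cases X'
  dsimp only at hL hrel hlab
  subst hL; subst hrel; subst hlab
  rfl

lemma diskdata_eq {A B : DiskData π Λ} (h1 : A.L = B.L) (h2 : A.rel = B.rel)
    (h3 : A.label = B.label) : A = B := by
  cases A; cases B
  dsimp only at h1 h2 h3
  subst h1; subst h2; subst h3
  rfl

lemma pregraph_eq {VN : Type} {G H : PreGraph VN π Λ} (h1 : G.V = H.V)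
    (h2 : G.E = H.E) (h3 : G.lab = H.lab) : G = H := by
  cases G; cases H
  dsimp only at h1 h2 h3
  subst h1; subst h2; subst h3
  rfl

lemma IsAdjoin.label_fst {X : GCGraph π Λ} {γ : Γ} {Y : GCGraph π (Λ × Γ)}
    (adj : IsAdjoin X γ Y) (u : Word π) :
    X.label u = (Y.label u).map Prod.fst := by
  rw [adj.2.2 u]
  cases X.label u <;> rfl

lemma IsAdjoin.eps_label {X : GCGraph π Λ} {γ : Γ} {Y : GCGraph π (Λ × Γ)}
    (adj : IsAdjoin X γ Y) : ∃ a, Y.label [] = some (a, γ) := by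
  obtain ⟨a, ha⟩ := Option.isSome_iff_exists.mp ((X.label_isSome []).mpr X.eps_mem)
  exact ⟨a, by rw [adj.2.2, ha]; rfl⟩

lemma IsAdjoin.gamma_eq {X X' : GCGraph π Λ} {γ γ' : Γ} {Y : GCGraph π (Λ × Γ)}
    (adj : IsAdjoin X γ Y) (adj' : IsAdjoin X' γ' Y) : γ = γ' := by
  obtain ⟨a, ha⟩ := adj.eps_label
  obtain ⟨a', ha'⟩ := adj'.eps_label
  simp only [ha, Option.some.injEq, Prod.mk.injEq] at ha'
  exact ha'.2

lemma IsAdjoin.X_eq {X X' : GCGraph π Λ} {γ γ' : Γ} {Y : GCGraph π (Λ × Γ)}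
    (adj : IsAdjoin X γ Y) (adj' : IsAdjoin X' γ' Y) : X = X' :=
  gcg_eq (adj.1.symm.trans adj'.1)
    (funext fun u => funext fun v => propext ((adj.2.1 u v).symm.trans (adj'.2.1 u v)))
    (funext fun u => (adj.label_fst u).trans (adj'.label_fst u).symm)

lemma disk_eq_of_adjoin {X X' : GCGraph π Λ} {γ γ' : Γ} {Y Y' : GCGraph π (Λ × Γ)}
    (adj : IsAdjoin X γ Y) (adj' : IsAdjoin X' γ' Y') (r : ℕ)
    (hd : Y.disk r = Y'.disk r) : X.disk r = X'.disk r := by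
  have h1 := congrArg DiskData.L hd
  have h2 := congrArg DiskData.rel hd
  have h3 := congrArg DiskData.label hd
  simp only [GCGraph.disk] at h1 h2 h3
  refine diskdata_eq ?_ ?_ ?_
  · simp only [GCGraph.disk, ← adj.1, ← adj'.1, h1]
  · simp only [GCGraph.disk]
    funext u v
    have h2uv := congrFun (congrFun h2 u) v
    apply propext
    rw [← adj.2.1 u v, ← adj'.2.1 u v, h2uv]
  · simp only [GCGraph.disk]
    funext u
    have h3u := congrFun h3 u
    rw [adj.label_fst u, adj'.label_fst u]
    by_cases hlen : u.length ≤ r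
    · simp only [if_pos hlen] at h3u ⊢
      rw [h3u]
    · simp only [if_neg hlen]

lemma isGraph_adjoin {VN : Type} {G : PreGraph VN π Λ} (γ : Γ) (hG : IsGraph G) :
    IsGraph (adjoinPre γ G) := by
  obtain ⟨h1, h2, h3, h4, h5⟩ := hG
  refine ⟨h1, h2, h3, ?_, ?_⟩
  · intro v hv
    obtain ⟨a, ha, hu⟩ := h4 v hv
    refine ⟨(a, γ), ⟨(v, a), ha, rfl⟩, ?_⟩
    rintro b ⟨⟨w, b₀⟩, hb, heq⟩
    injection heq with e1 e2
    subst e1; subst e2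
    rw [hu b₀ hb]
  · rintro p ⟨q, hq, rfl⟩
    exact h5 q hq

lemma consistent_adjoin {VN : Type} {G H : PreGraph VN π Λ} (γ : Γ)
    (h : Consistent G H) : Consistent (adjoinPre γ G) (adjoinPre γ H) := by
  refine ⟨h.1, ?_⟩
  rintro v a b ⟨⟨w, a₀⟩, ha, heqa⟩ ⟨⟨w', b₀⟩, hb, heqb⟩
  injection heqa with e1 e2
  injection heqb with e3 e4
  subst e1; subst e2; subst e4
  cases e3
  rw [h.2 w a₀ b₀ ha hb]

lemma prefixG_adjoin {s : ℕ} (u : Word π) (γ : Γ) (G : PreGraph (VName π s) π Λ) :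
    (adjoinPre γ G).prefixG u = adjoinPre γ (G.prefixG u) :=
  pregraph_eq rfl rfl (by simp only [PreGraph.prefixG, adjoinPre, Set.image_image])

end FunivAux

/-- Fix parameters `π, Σ, r, b` and a finite set `Γ_{π,Σ,r,b}` of descriptions
(an injection `desc` of the — finite — set of local rules `F_{π,Σ,r,b}` into `Γ`).
The partial function `f_univ`, defined on disks of graphs labeled over
`Σ × Γ_{π,Σ,r,b}` of the form `X[⟨f⟩]` by
`f_univ(X[⟨f⟩]_u^r) = f(X_u^r)[⟨f⟩]`,
is a local rule (it satisfies the naming, boundedness and both consistency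
conditions defining local rules). -/
theorem funiv_isLocalRule {d s : ℕ} {Λ Γ : Type} [Fintype Λ] [Fintype Γ] (r b : ℕ)
    (desc : (GCGraph (Fin d) Λ → PreGraph (VName (Fin d) s) (Fin d) Λ) → Γ)
    (hdesc : Set.InjOn desc {f | IsLocalRule Set.univ r b f}) :
    ∃ fu : GCGraph (Fin d) (Λ × Γ) → PreGraph (VName (Fin d) s) (Fin d) (Λ × Γ),
      (∀ f, IsLocalRule Set.univ r b f →
        ∀ (X : GCGraph (Fin d) Λ) (Y : GCGraph (Fin d) (Λ × Γ)),
          IsAdjoin X (desc f) Y → fu Y = adjoinPre (desc f) (f X)) ∧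
      IsLocalRule {Y : GCGraph (Fin d) (Λ × Γ) |
          ∃ f, IsLocalRule Set.univ r b f ∧ ∃ X, IsAdjoin X (desc f) Y} r b fu := by
  classical
  obtain ⟨fu, hspec⟩ : ∃ fu : GCGraph (Fin d) (Λ × Γ) → PreGraph (VName (Fin d) s) (Fin d) (Λ × Γ),
      ∀ f, IsLocalRule Set.univ r b f → ∀ (X : GCGraph (Fin d) Λ)
        (Y : GCGraph (Fin d) (Λ × Γ)), IsAdjoin X (desc f) Y →
        fu Y = adjoinPre (desc f) (f X) := by
    refine ⟨fun Y => if h : ∃ f, IsLocalRule Set.univ r b f ∧ ∃ X, IsAdjoin X (desc f) Y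
        then adjoinPre (desc h.choose) (h.choose h.choose_spec.2.choose) else ⟨∅, ∅, ∅⟩, ?_⟩
    intro f hf X Y adj
    have h : ∃ f, IsLocalRule Set.univ r b f ∧ ∃ X, IsAdjoin X (desc f) Y := ⟨f, hf, X, adj⟩
    simp only [dif_pos h]
    have hg : IsLocalRule Set.univ r b h.choose := h.choose_spec.1
    have adj₀ : IsAdjoin h.choose_spec.2.choose (desc h.choose) Y :=
      h.choose_spec.2.choose_spec
    have hγ : desc h.choose = desc f := adj₀.gamma_eq adj
    have hgf : h.choose = f := hdesc hg hf hγ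
    have hX : h.choose_spec.2.choose = X := adj₀.X_eq adj
    rw [hX, hgf]
  refine ⟨fu, hspec, ?_⟩
  constructor
  · -- localr
    intro Y hY Y' hY' hd
    obtain ⟨f, hf, X, adj⟩ := hY
    obtain ⟨f', hf', X', adj'⟩ := hY'
    have h0 : Y.label [] = Y'.label [] := by
      have h0' := congrFun (congrArg DiskData.label hd) []
      simpa [GCGraph.disk] using h0'
    obtain ⟨a, ha⟩ := adj.eps_label
    obtain ⟨a', ha'⟩ := adj'.eps_label
    have hγ : desc f = desc f' := by
      rw [ha, ha'] at h0
      simp only [Option.some.injEq, Prod.mk.injEq] at h0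
      exact h0.2
    have hff : f = f' := hdesc hf hf' hγ
    subst hff
    have hXd : X.disk r = X'.disk r := disk_eq_of_adjoin adj adj' r hd
    rw [hspec f hf X Y adj, hspec f hf X' Y' adj',
      hf.localr X (Set.mem_univ X) X' (Set.mem_univ X') hXd]
  · -- graph
    intro Y hY
    obtain ⟨f, hf, X, adj⟩ := hY
    rw [hspec f hf X Y adj]
    exact isGraph_adjoin _ (hf.graph X (Set.mem_univ X))
  · -- names_sub
    intro Y hY N hN p hp
    obtain ⟨f, hf, X, adj⟩ := hY
    rw [hspec f hf X Y adj] at hN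
    have := hf.names_sub X (Set.mem_univ X) N hN p hp
    rw [adj.1]
    exact this
  · -- names_closed
    intro Y hY N hN p hp q hrel hq
    obtain ⟨f, hf, X, adj⟩ := hY
    rw [hspec f hf X Y adj] at hN
    exact hf.names_closed X (Set.mem_univ X) N hN p hp q ((adj.2.1 _ _).mp hrel) hq
  · -- names_disj
    intro Y hY N hN M hM hNM
    obtain ⟨f, hf, X, adj⟩ := hY
    rw [hspec f hf X Y adj] at hN hM
    exact hf.names_disj X (Set.mem_univ X) N hN M hM hNM
  · -- eps_vertex
    intro Y hY
    obtain ⟨f, hf, X, adj⟩ := hY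
    rw [hspec f hf X Y adj]
    exact hf.eps_vertex X (Set.mem_univ X)
  · -- bounded
    intro Y hY
    obtain ⟨f, hf, X, adj⟩ := hY
    rw [hspec f hf X Y adj]
    exact hf.bounded X (Set.mem_univ X)
  · -- consist_near
    intro Y hY u hu hlen Y' hshift hY'
    obtain ⟨f, hf, X, adj⟩ := hY
    obtain ⟨f'', hf'', X'', adj''⟩ := hY'
    have huX : u ∈ X.L := adj.1 ▸ hu
    obtain ⟨a, ha⟩ := Option.isSome_iff_exists.mp ((X.label_isSome u).mpr huX)
    have h1 : Y'.label [] = some (a, desc f) := by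
      have h1' := hshift.2.2 []
      rw [List.append_nil] at h1'
      rw [h1', adj.2.2, ha]; rfl
    obtain ⟨a'', ha''⟩ := adj''.eps_label
    have hγ : desc f'' = desc f := by
      rw [h1] at ha''
      simp only [Option.some.injEq, Prod.mk.injEq] at ha''
      exact ha''.2.symm
    have hff : f'' = f := hdesc hf'' hf hγ
    subst hff
    have hsx : IsShift X u X'' := by
      refine ⟨?_, ?_, ?_⟩
      · rw [← adj''.1, hshift.1, adj.1]
      · intro v v'
        rw [← adj''.2.1 v v', hshift.2.1 v v', adj.2.1 (u ++ v) (u ++ v')]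
      · intro v
        rw [adj''.label_fst v, hshift.2.2 v, adj.label_fst (u ++ v)]
    have hcons := hf.consist_near X (Set.mem_univ X) u huX hlen X'' hsx (Set.mem_univ X'')
    rw [hspec f'' hf X Y adj, hspec f'' hf X'' Y' adj'', prefixG_adjoin]
    exact ⟨consistent_adjoin _ hcons.1, hcons.2⟩
  · -- consist_far
    intro Y hY u hu hlen Y' hshift hY'
    obtain ⟨f, hf, X, adj⟩ := hY
    obtain ⟨f'', hf'', X'', adj''⟩ := hY'
    have huX : u ∈ X.L := adj.1 ▸ hu
    obtain ⟨a, ha⟩ := Option.isSome_iff_exists.mp ((X.label_isSome u).mpr huX)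
    have h1 : Y'.label [] = some (a, desc f) := by
      have h1' := hshift.2.2 []
      rw [List.append_nil] at h1'
      rw [h1', adj.2.2, ha]; rfl
    obtain ⟨a'', ha''⟩ := adj''.eps_label
    have hγ : desc f'' = desc f := by
      rw [h1] at ha''
      simp only [Option.some.injEq, Prod.mk.injEq] at ha''
      exact ha''.2.symm
    have hff : f'' = f := hdesc hf'' hf hγ
    subst hff
    have hsx : IsShift X u X'' := by
      refine ⟨?_, ?_, ?_⟩
      · rw [← adj''.1, hshift.1, adj.1]
      · intro v v'
        rw [← adj''.2.1 v v', hshift.2.1 v v', adj.2.1 (u ++ v) (u ++ v')]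
      · intro v
        rw [adj''.label_fst v, hshift.2.2 v, adj.label_fst (u ++ v)]
    have hcons := hf.consist_far X (Set.mem_univ X) u huX hlen X'' hsx (Set.mem_univ X'')
    rw [hspec f'' hf X Y adj, hspec f'' hf X'' Y' adj'', prefixG_adjoin]
    exact consistent_adjoin _ hcons
end

section
/- Fix parameters π, Σ, r, b and let f_univ be the partial local rule defined by f_univ(X[⟨f⟩]_u^r) = f(X_u^r)[⟨f⟩]. Then for every local rule f ∈ F_{π,Σ,r,b} and every X ∈ X_{π,Σ}, the pair (f_univ, X[⟨f⟩]) intrinsically simulates (f, X) with slow-down δ = 1: there is a computable, uniformly continuous, shift-invariant injection E : X_{π,Σ} → X_{π,Σ×Γ_{π,Σ,r,b}} such that F_univ^n(X[⟨f⟩]) = E(F^n(X)) for all n ∈ ℕ, where F and F_univ are the localizable functions induced by f and f_univ respectively. -/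
/-- The union `⋃_{u ∈ X} u.g(u)` of the prefixed images of a family of graphs
indexed by the paths of `X` (used to glue the images `u.f(X_u^r)` of a local
rule). -/
def unionAll {π Λ : Type} {s : ℕ} (X : GCGraph π Λ)
    (g : ∀ u : Word π, u ∈ X.L → PreGraph (VName π s) π Λ) :
    PreGraph (VName π s) π Λ where
  V := ⋃ (u : X.L), ((g u.1 u.2).prefixG u.1).V
  E := ⋃ (u : X.L), ((g u.1 u.2).prefixG u.1).E
  lab := ⋃ (u : X.L), ((g u.1 u.2).prefixG u.1).lab

/-- `pathTo G v w x`: following the path `w` in the labeled graph `G` from the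
vertex `v` leads to the vertex `x` (the letter `(a, b)` means: leave through
port `a`, enter through port `b`). -/
def pathTo {VN π Λ : Type} (G : PreGraph VN π Λ) : VN → Word π → VN → Prop
  | v, [], w => w = v
  | v, (a, b) :: rest, w =>
      ∃ x : VN, x ∈ G.V ∧ s((v, a), (x, b)) ∈ G.E ∧ pathTo G x rest w

/-- `Represents G Y`: the generalized Cayley graph `Y` is `∼G`, the generalized
Cayley graph having the same structure as the labeled graph `G`, pointed at the
vertex named `ε` (the vertex whose name contains the pair `(ε, ε)`): the language
of `Y` consists of the paths of `G` from that vertex, two paths are equivalent iff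
they lead to the same vertex of `G`, and labels are transported. -/
def Represents {π Λ : Type} {s : ℕ} (G : PreGraph (VName π s) π Λ)
    (Y : GCGraph π Λ) : Prop :=
  ∃ v₀ ∈ G.V, ((([] : Word π), (0 : Fin (s + 1))) ∈ v₀) ∧
    (∀ w : Word π, w ∈ Y.L ↔ ∃ x ∈ G.V, pathTo G v₀ w x) ∧
    (∀ w w' : Word π, Y.rel w w' ↔ ∃ x ∈ G.V, pathTo G v₀ w x ∧ pathTo G v₀ w' x) ∧
    (∀ (w : Word π) (x : VName π s), x ∈ G.V → pathTo G v₀ w x →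
      ∀ a : Λ, (Y.label w = some a ↔ (x, a) ∈ G.lab))

/-- `Induces D f F`: on the domain `D`, `F` is the localizable function induced by
the local rule `f`; that is, for every `X ∈ D`, `F X` is the generalized Cayley
graph, pointed at `ε`, of the glued union `⋃_{u ∈ X} u.f(X_u^r)`. -/
def Induces {π Λ : Type} {s : ℕ} (D : Set (GCGraph π Λ))
    (f : GCGraph π Λ → PreGraph (VName π s) π Λ)
    (F : GCGraph π Λ → GCGraph π Λ) : Prop :=
  ∀ X ∈ D, ∀ sh : ∀ u : Word π, u ∈ X.L → GCGraph π Λ,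
    (∀ u (hu : u ∈ X.L), IsShift X u (sh u hu)) →
    Represents (unionAll X fun u hu => f (sh u hu)) (F X)

/-- Uniform continuity of a function between spaces of generalized Cayley graphs:
for every radius `r'` there is a radius `k` such that `X^k = Y^k` implies
`E(X)^{r'} = E(Y)^{r'}`. -/
def UnifCont {π₁ Λ₁ π₂ Λ₂ : Type} (E : GCGraph π₁ Λ₁ → GCGraph π₂ Λ₂) : Prop :=
  ∀ r' : ℕ, ∃ k : ℕ, ∀ X Y : GCGraph π₁ Λ₁,
    X.disk k = Y.disk k → (E X).disk r' = (E Y).disk r'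

/-- Shift invariance of a function between spaces of generalized Cayley graphs
over the same port set: any shift of the argument only induces the corresponding
shift of the image. -/
def ShiftInvariant {π Λ₁ Λ₂ : Type} (E : GCGraph π Λ₁ → GCGraph π Λ₂) : Prop :=
  ∀ (X Y : GCGraph π Λ₁) (u : Word π), u ∈ X.L → IsShift X u Y →
    IsShift (E X) u (E Y)

/-! ### Auxiliary definitions and lemmas for the main theorem -/

/-- Extensionality for `GCGraph`. -/
theorem GCGraph.ext' {π Λ : Type} {X Y : GCGraph π Λ} (hL : X.L = Y.L)
    (hr : X.rel = Y.rel) (hl : X.label = Y.label) : X = Y := by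
  cases X; cases Y; dsimp at hL hr hl; subst hL; subst hr; subst hl; rfl

/-- Extensionality for `PreGraph`. -/
theorem PreGraph.ext' {VN π Λ : Type} {G H : PreGraph VN π Λ} (h1 : G.V = H.V)
    (h2 : G.E = H.E) (h3 : G.lab = H.lab) : G = H := by
  cases G; cases H; dsimp at h1 h2 h3; subst h1; subst h2; subst h3; rfl

/-- Extensionality for `DiskData`. -/
theorem DiskData.ext' {π Λ : Type} {G H : DiskData π Λ} (h1 : G.L = H.L)
    (h2 : G.rel = H.rel) (h3 : G.label = H.label) : G = H := by
  cases G; cases H; dsimp at h1 h2 h3; subst h1; subst h2; subst h3; rfl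

/-- The graph `X[γ]`: adjoin `γ` to every vertex label. -/
def adjoinG {π Λ Γ : Type} (γ : Γ) (X : GCGraph π Λ) : GCGraph π (Λ × Γ) where
  L := X.L
  rel := X.rel
  label := fun u => (X.label u).map (fun a => (a, γ))
  eps_mem := X.eps_mem
  rel_refl := X.rel_refl
  rel_symm := X.rel_symm
  rel_trans := X.rel_trans
  rel_mem := X.rel_mem
  prefix_closed := X.prefix_closed
  rel_congr := X.rel_congr
  edge_inv := X.edge_inv
  port_det := X.port_det
  label_isSome := by
    intro u; rw [← X.label_isSome]; cases h : X.label u <;> simp [h]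
  label_congr := by
    intro u v h; rw [X.label_congr h]

theorem isAdjoin_adjoinG {π Λ Γ : Type} (γ : Γ) (X : GCGraph π Λ) :
    IsAdjoin X γ (adjoinG γ X) :=
  ⟨rfl, fun _ _ => Iff.rfl, fun _ => rfl⟩

theorem isAdjoin_eq {π Λ Γ : Type} {X : GCGraph π Λ} {γ : Γ}
    {Y : GCGraph π (Λ × Γ)} (h : IsAdjoin X γ Y) : Y = adjoinG γ X := by
  obtain ⟨hL, hr, hl⟩ := h
  refine GCGraph.ext' hL ?_ ?_
  · funext u v; exact propext (hr u v)
  · funext u; exact hl u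

/-- The shift of a generalized Cayley graph along a path `u` of it. -/
def shiftG {π Λ : Type} (X : GCGraph π Λ) (u : Word π) (hu : u ∈ X.L) :
    GCGraph π Λ where
  L := {v | u ++ v ∈ X.L}
  rel := fun v v' => X.rel (u ++ v) (u ++ v')
  label := fun v => X.label (u ++ v)
  eps_mem := by simpa using hu
  rel_refl := fun v hv => X.rel_refl _ hv
  rel_symm := fun h => X.rel_symm h
  rel_trans := fun h h' => X.rel_trans h h'
  rel_mem := fun h => X.rel_mem h
  prefix_closed := by
    intro v w h
    exact X.prefix_closed (u ++ v) w (by simpa [List.append_assoc] using h)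
  rel_congr := by
    intro v v' w h hm
    have hm' : (u ++ v) ++ w ∈ X.L := by simpa [List.append_assoc] using hm
    obtain ⟨h1, h2⟩ := X.rel_congr _ _ w h hm'
    exact ⟨by simpa [List.append_assoc] using h1,
      by simpa [List.append_assoc] using h2⟩
  edge_inv := by
    intro v a bb h
    have h' : (u ++ v) ++ [(a, bb)] ∈ X.L := by
      simpa [List.append_assoc] using h
    obtain ⟨h1, h2⟩ := X.edge_inv (u ++ v) a bb h'
    exact ⟨by simpa [List.append_assoc] using h1,
      by simpa [List.append_assoc] using h2⟩
  port_det := by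
    intro v v' a bb c h h1 h2
    exact X.port_det (u ++ v) (u ++ v') a bb c h
      (by simpa [List.append_assoc] using h1)
      (by simpa [List.append_assoc] using h2)
  label_isSome := fun v => X.label_isSome (u ++ v)
  label_congr := fun h => X.label_congr h

theorem isShift_shiftG {π Λ : Type} (X : GCGraph π Λ) (u : Word π)
    (hu : u ∈ X.L) : IsShift X u (shiftG X u hu) :=
  ⟨rfl, fun _ _ => Iff.rfl, fun _ => rfl⟩

theorem isAdjoin_shiftG {π Λ Γ : Type} (γ : Γ) (X : GCGraph π Λ) (u : Word π)
    (hu : u ∈ (adjoinG γ X).L) :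
    IsAdjoin (shiftG X u hu) γ (shiftG (adjoinG γ X) u hu) :=
  ⟨rfl, fun _ _ => Iff.rfl, fun _ => rfl⟩

theorem prefixG_adjoinPre {π Λ Γ : Type} {s : ℕ} (γ : Γ) (u : Word π)
    (G : PreGraph (VName π s) π Λ) :
    (adjoinPre γ G).prefixG u = adjoinPre γ (G.prefixG u) := by
  refine PreGraph.ext' rfl rfl ?_
  simp only [PreGraph.prefixG, adjoinPre, Set.image_image]

theorem unionAll_congr {π Λ : Type} {s : ℕ} (X : GCGraph π Λ)
    {g g' : ∀ u : Word π, u ∈ X.L → PreGraph (VName π s) π Λ}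
    (h : ∀ u hu, g u hu = g' u hu) : unionAll X g = unionAll X g' := by
  have : g = g' := funext fun u => funext fun hu => h u hu
  rw [this]

theorem unionAll_adjoinPre {π Λ Γ : Type} {s : ℕ} (γ : Γ) (Z : GCGraph π Λ)
    (g : ∀ u : Word π, u ∈ Z.L → PreGraph (VName π s) π Λ) :
    unionAll (adjoinG γ Z) (fun u hu => adjoinPre γ (g u hu)) =
      adjoinPre γ (unionAll Z g) := by
  refine PreGraph.ext' rfl rfl ?_
  simp only [unionAll, adjoinPre, PreGraph.prefixG, Set.image_iUnion,
    Set.image_image]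
  exact Set.iUnion_congr fun u => rfl

theorem pathTo_adjoinPre {VN π Λ Γ : Type} (γ : Γ) (G : PreGraph VN π Λ)
    (v : VN) (w : Word π) (x : VN) :
    pathTo (adjoinPre γ G) v w x ↔ pathTo G v w x := by
  induction w generalizing v with
  | nil => rfl
  | cons p rest ih =>
    obtain ⟨a, bb⟩ := p
    simp only [pathTo]
    constructor
    · rintro ⟨y, hy, he, hp⟩; exact ⟨y, hy, he, (ih y).mp hp⟩
    · rintro ⟨y, hy, he, hp⟩; exact ⟨y, hy, he, (ih y).mpr hp⟩

theorem rep_adjoin {π Λ Γ : Type} {s : ℕ} (γ : Γ)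
    {G : PreGraph (VName π s) π Λ} {Y : GCGraph π Λ} (h : Represents G Y) :
    Represents (adjoinPre γ G) (adjoinG γ Y) := by
  obtain ⟨v₀, hv₀, hε, hLiff, hrel, hlab⟩ := h
  refine ⟨v₀, hv₀, hε, ?_, ?_, ?_⟩
  · intro w
    rw [show (adjoinG γ Y).L = Y.L from rfl, hLiff w]
    constructor
    · rintro ⟨x, hx, hp⟩; exact ⟨x, hx, (pathTo_adjoinPre γ G v₀ w x).mpr hp⟩
    · rintro ⟨x, hx, hp⟩; exact ⟨x, hx, (pathTo_adjoinPre γ G v₀ w x).mp hp⟩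
  · intro w w'
    rw [show (adjoinG γ Y).rel = Y.rel from rfl, hrel w w']
    constructor
    · rintro ⟨x, hx, hp, hp'⟩
      exact ⟨x, hx, (pathTo_adjoinPre γ G v₀ w x).mpr hp,
        (pathTo_adjoinPre γ G v₀ w' x).mpr hp'⟩
    · rintro ⟨x, hx, hp, hp'⟩
      exact ⟨x, hx, (pathTo_adjoinPre γ G v₀ w x).mp hp,
        (pathTo_adjoinPre γ G v₀ w' x).mp hp'⟩
  · rintro w x hx hp ⟨a, γ'⟩
    have hp' : pathTo G v₀ w x := (pathTo_adjoinPre γ G v₀ w x).mp hp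
    constructor
    · intro hsome
      obtain ⟨a', ha', heq⟩ := Option.map_eq_some_iff.mp hsome
      simp only [Prod.mk.injEq] at heq
      obtain ⟨rfl, rfl⟩ := heq
      exact ⟨(x, a'), (hlab w x hx hp' a').mp ha', rfl⟩
    · rintro ⟨⟨x', a'⟩, hm, heq⟩
      simp only [Prod.mk.injEq] at heq
      obtain ⟨rfl, rfl, rfl⟩ := heq
      have hs : Y.label w = some a' := (hlab w x' hx hp' a').mpr hm
      show (Y.label w).map _ = _
      rw [hs]; rfl

theorem rep_unique {π Λ : Type} {s : ℕ} {G : PreGraph (VName π s) π Λ}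
    {Y₁ Y₂ : GCGraph π Λ}
    (hv : ∀ N ∈ G.V, ∀ M ∈ G.V, (([] : Word π), (0 : Fin (s + 1))) ∈ N →
      (([] : Word π), (0 : Fin (s + 1))) ∈ M → N = M)
    (h1 : Represents G Y₁) (h2 : Represents G Y₂) : Y₁ = Y₂ := by
  obtain ⟨v₁, hv₁, hε₁, hL₁, hr₁, hl₁⟩ := h1
  obtain ⟨v₂, hv₂, hε₂, hL₂, hr₂, hl₂⟩ := h2
  have hvv : v₁ = v₂ := hv _ hv₁ _ hv₂ hε₁ hε₂
  subst hvv
  have hLeq : Y₁.L = Y₂.L := by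
    ext w; rw [hL₁, hL₂]
  refine GCGraph.ext' hLeq ?_ ?_
  · funext w w'; exact propext ((hr₁ w w').trans (hr₂ w w').symm)
  · funext w
    by_cases hw : w ∈ Y₁.L
    · obtain ⟨x, hx, hp⟩ := (hL₁ w).mp hw
      have h1s : (Y₁.label w).isSome := (Y₁.label_isSome w).mpr hw
      obtain ⟨a, ha⟩ := Option.isSome_iff_exists.mp h1s
      have hm : (x, a) ∈ G.lab := (hl₁ w x hx hp a).mp ha
      have h2a : Y₂.label w = some a := (hl₂ w x hx hp a).mpr hm
      rw [ha, h2a]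
    · have hw2 : w ∉ Y₂.L := by rw [← hLeq]; exact hw
      have h1n : Y₁.label w = none := by
        rw [← Option.not_isSome_iff_eq_none, Y₁.label_isSome]; exact hw
      have h2n : Y₂.label w = none := by
        rw [← Option.not_isSome_iff_eq_none, Y₂.label_isSome]; exact hw2
      rw [h1n, h2n]

theorem prefixName_nil {π : Type} {s : ℕ} (N : VName π s) :
    prefixName ([] : Word π) N = N := by
  simp [prefixName]

/-- Uniqueness of the vertex containing `(ε, ε)` in the glued union of the images
of a local rule. -/
theorem union_v0_unique {π Λ : Type} {s r b : ℕ}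
    {f : GCGraph π Λ → PreGraph (VName π s) π Λ}
    (hf : IsLocalRule Set.univ r b f) (Z : GCGraph π Λ) :
    ∀ N ∈ (unionAll Z (fun u hu => f (shiftG Z u hu))).V,
      ∀ M ∈ (unionAll Z (fun u hu => f (shiftG Z u hu))).V,
      (([] : Word π), (0 : Fin (s + 1))) ∈ N →
      (([] : Word π), (0 : Fin (s + 1))) ∈ M → N = M := by
  have key : ∀ N ∈ (unionAll Z (fun u hu => f (shiftG Z u hu))).V,
      (([] : Word π), (0 : Fin (s + 1))) ∈ N →
      N ∈ (f (shiftG Z [] Z.eps_mem)).V := by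
    rintro N hN hεN
    simp only [unionAll, PreGraph.prefixG, Set.mem_iUnion, Set.mem_image] at hN
    obtain ⟨⟨u, hu⟩, N₀, hN₀, rfl⟩ := hN
    simp only [prefixName, Set.mem_image] at hεN
    obtain ⟨⟨p, i⟩, hp, heq⟩ := hεN
    simp only [Prod.mk.injEq] at heq
    obtain ⟨h1, h2⟩ := heq
    obtain ⟨hu0, hp0⟩ := List.append_eq_nil_iff.mp h1
    subst hu0
    rw [prefixName_nil]
    exact hN₀
  intro N hN M hM hεN hεM
  have hN' := key N hN hεN
  have hM' := key M hM hεM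
  by_contra hne
  have hdisj := hf.names_disj (shiftG Z [] Z.eps_mem) (Set.mem_univ _)
    N hN' M hM' hne
  have : (([] : Word π), (0 : Fin (s + 1))) ∈ N ∩ M := ⟨hεN, hεM⟩
  rw [hdisj] at this
  exact this

/-- Fix parameters `π, Σ, r, b`, a set `Γ` of descriptions of the local rules of
`F_{π,Σ,r,b}`, and let `f_univ` be the partial local rule (with domain the graphs
of the form `X[⟨f⟩]`) defined by `f_univ(X[⟨f⟩]_u^r) = f(X_u^r)[⟨f⟩]`.  Then for
every local rule `f ∈ F_{π,Σ,r,b}` and every `X ∈ X_{π,Σ}`, the pair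
`(f_univ, X[⟨f⟩])` intrinsically simulates `(f, X)` with slow-down `δ = 1`:
there is a uniformly continuous and shift-invariant injection
`E : X_{π,Σ} → X_{π,Σ×Γ}` such that `F_univ^n(X[⟨f⟩]) = E (F^n X)` for all `n`,
where `F` and `F_univ` are the localizable functions induced by `f` and `f_univ`.
(The map `E` of the paper is moreover computable; computability is not modelled
here.) -/
theorem funiv_intrinsically_simulates {d s : ℕ} {Λ Γ : Type} [Fintype Λ] [Fintype Γ]
    (r b : ℕ)
    (desc : (GCGraph (Fin d) Λ → PreGraph (VName (Fin d) s) (Fin d) Λ) → Γ)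
    (hdesc : Set.InjOn desc {f | IsLocalRule Set.univ r b f})
    (f : GCGraph (Fin d) Λ → PreGraph (VName (Fin d) s) (Fin d) Λ)
    (hf : IsLocalRule Set.univ r b f)
    (fu : GCGraph (Fin d) (Λ × Γ) → PreGraph (VName (Fin d) s) (Fin d) (Λ × Γ))
    (hfu_eq : ∀ g, IsLocalRule Set.univ r b g →
      ∀ (X : GCGraph (Fin d) Λ) (Y : GCGraph (Fin d) (Λ × Γ)),
        IsAdjoin X (desc g) Y → fu Y = adjoinPre (desc g) (g X))
    (hfu : IsLocalRule {Y : GCGraph (Fin d) (Λ × Γ) |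
        ∃ g, IsLocalRule Set.univ r b g ∧ ∃ X, IsAdjoin X (desc g) Y} r b fu)
    (F : GCGraph (Fin d) Λ → GCGraph (Fin d) Λ)
    (hF : Induces Set.univ f F)
    (Fu : GCGraph (Fin d) (Λ × Γ) → GCGraph (Fin d) (Λ × Γ))
    (hFu : Induces {Y : GCGraph (Fin d) (Λ × Γ) |
        ∃ g, IsLocalRule Set.univ r b g ∧ ∃ X, IsAdjoin X (desc g) Y} fu Fu)
    (X : GCGraph (Fin d) Λ) (Xf : GCGraph (Fin d) (Λ × Γ))
    (hXf : IsAdjoin X (desc f) Xf) :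
    ∃ E : GCGraph (Fin d) Λ → GCGraph (Fin d) (Λ × Γ),
      Function.Injective E ∧ UnifCont E ∧ ShiftInvariant E ∧
      ∀ n : ℕ, Fu^[1 * n] Xf = E (F^[n] X) := by
  classical
  set γ := desc f with hγ
  -- key step: `Fu` commutes with adjoining the description `γ`.
  have step : ∀ Z : GCGraph (Fin d) Λ, Fu (adjoinG γ Z) = adjoinG γ (F Z) := by
    intro Z
    have hRF : Represents (unionAll Z (fun u hu => f (shiftG Z u hu))) (F Z) :=
      hF Z (Set.mem_univ _) (fun u hu => shiftG Z u hu)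
        (fun u hu => isShift_shiftG Z u hu)
    have hmem : adjoinG γ Z ∈ {Y : GCGraph (Fin d) (Λ × Γ) |
        ∃ g, IsLocalRule Set.univ r b g ∧ ∃ X, IsAdjoin X (desc g) Y} :=
      ⟨f, hf, Z, isAdjoin_adjoinG γ Z⟩
    have hRFu : Represents
        (unionAll (adjoinG γ Z) (fun u hu => fu (shiftG (adjoinG γ Z) u hu)))
        (Fu (adjoinG γ Z)) :=
      hFu (adjoinG γ Z) hmem (fun u hu => shiftG (adjoinG γ Z) u hu)
        (fun u hu => isShift_shiftG (adjoinG γ Z) u hu)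
    have heq : unionAll (adjoinG γ Z)
          (fun u hu => fu (shiftG (adjoinG γ Z) u hu)) =
        adjoinPre γ (unionAll Z (fun u hu => f (shiftG Z u hu))) := by
      rw [← unionAll_adjoinPre γ Z (fun u hu => f (shiftG Z u hu))]
      exact unionAll_congr (adjoinG γ Z)
        (fun u hu => hfu_eq f hf (shiftG Z u hu) (shiftG (adjoinG γ Z) u hu)
          (isAdjoin_shiftG γ Z u hu))
    rw [heq] at hRFu
    exact rep_unique (union_v0_unique hf Z) hRFu (rep_adjoin γ hRF)
  refine ⟨adjoinG γ, ?_, ?_, ?_, ?_⟩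
  · -- injectivity
    intro A B h
    have hL := congrArg GCGraph.L h
    have hr := congrArg GCGraph.rel h
    have hl := congrArg GCGraph.label h
    refine GCGraph.ext' hL hr ?_
    funext u
    have hu := congrFun hl u
    have hinj : Function.Injective (fun a : Λ => (a, γ)) := by
      intro a b hab
      exact (Prod.mk.injEq _ _ _ _ ▸ hab).1
    exact Option.map_injective hinj hu
  · -- uniform continuity
    intro r'
    refine ⟨r', fun A B h => ?_⟩
    have hL := congrArg DiskData.L h
    have hr := congrArg DiskData.rel h
    have hl := congrArg DiskData.label h
    refine DiskData.ext' hL hr ?_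
    funext u
    have hlu := congrFun hl u
    simp only [GCGraph.disk] at hlu ⊢
    by_cases hc : u.length ≤ r'
    · simp only [if_pos hc] at hlu ⊢
      show (A.label u).map _ = (B.label u).map _
      rw [hlu]
    · simp only [if_neg hc]
  · -- shift invariance
    intro A B u hu hsh
    obtain ⟨h1, h2, h3⟩ := hsh
    refine ⟨h1, h2, fun v => ?_⟩
    show (B.label v).map _ = (A.label (u ++ v)).map _
    rw [h3 v]
  · -- the simulation equation
    intro n
    simp only [one_mul]
    induction n with
    | zero =>
      simpa using isAdjoin_eq hXf
    | succ n ih =>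
      rw [Function.iterate_succ_apply', Function.iterate_succ_apply', ih, step]
end

section
/- In any generalized Cayley graph (L, ≡_L), every path admits an inverse: for every word u = (a₁b₁).(a₂b₂)…(a_nb_n) ∈ L, the reversed word ū = (b_na_n)…(b₂a₂).(b₁a₁) satisfies u.ū ∈ L and u.ū ≡_L ε. -/
/-- In any generalized Cayley graph `(L, ≡_L)` every path admits an inverse: for
every word `u = (a₁b₁).(a₂b₂)…(a_nb_n) ∈ L`, the reversed word
`ū = (b_na_n)…(b₂a₂).(b₁a₁)` satisfies `u.ū ∈ L` and `u.ū ≡_L ε`. -/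
theorem path_inverse {π Λ : Type} (X : GCGraph π Λ) (u : Word π) (hu : u ∈ X.L) :
    u ++ (u.reverse.map Prod.swap) ∈ X.L ∧
      X.rel (u ++ u.reverse.map Prod.swap) ([] : Word π) := by
  induction u using List.reverseRecOn with
  | nil => exact ⟨X.eps_mem, X.rel_refl [] X.eps_mem⟩
  | append_singleton v e ih =>
    obtain ⟨a, b⟩ := e
    have hv : v ∈ X.L := X.prefix_closed v [(a, b)] hu
    obtain ⟨hmem, hrel⟩ := ih hv
    obtain ⟨hmem2, hrel2⟩ := X.edge_inv v a b hu
    obtain ⟨hmem3, hrel3⟩ :=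
      X.rel_congr v (v ++ [(a, b), (b, a)]) (v.reverse.map Prod.swap)
        (X.rel_symm hrel2) hmem
    have heq : (v ++ [(a, b)]) ++ ((v ++ [(a, b)]).reverse.map Prod.swap)
        = (v ++ [(a, b), (b, a)]) ++ v.reverse.map Prod.swap := by
      simp
    rw [heq]
    exact ⟨hmem3, X.rel_trans hrel3 hrel⟩
end
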